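/- arXiv:1901.10025 — 3 statements merged into one kernel-verified Lean document; each statement's English description precedes it below -/
import Mathlib

section
/- Specializing the constrained minimization: $\inf\left(\tfrac12\|h\|_{\mathbf{H}_1}^2 : h(0)=0,\ h(1)=\tfrac{x^1}{\epsilon},\ \int_0^1 h(t)dt = \tfrac{x^2}{\epsilon^3}\right) = \frac{2(x^1)^2}{\epsilon^2} - \frac{6 x^1 x^2}{\epsilon^4} + \frac{6 (x^2)^2}{\epsilon^6}$ for every $\epsilon>0$ and $(x^1,x^2)\in\mathbb{R}^2$. -/
open MeasureTheory

lemma kol_triangle {g : ℝ → ℝ} (hg : IntegrableOn g (Set.Icc 0 1)) :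
    (∫ t in (0:ℝ)..1, ∫ s in (0:ℝ)..t, g s) = ∫ t in (0:ℝ)..1, (1 - t) * g t := by
  have hg' : IntegrableOn g (Set.Ioc 0 1) := hg.mono_set Set.Ioc_subset_Icc_self
  set μ := MeasureSpace.volume.restrict (Set.Ioc (0:ℝ) 1) with hμ
  haveI : IsFiniteMeasure μ := by
    constructor
    rw [hμ, Measure.restrict_apply_univ]
    exact measure_Ioc_lt_top
  set f : ℝ → ℝ → ℝ := fun t s => Set.indicator (Set.Ioc 0 t) g s with hf
  have hfeq : Function.uncurry f =
      Set.indicator {p : ℝ × ℝ | 0 < p.2 ∧ p.2 ≤ p.1} (fun p => g p.2) := by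
    funext p
    simp [hf, Function.uncurry, Set.indicator_apply, Set.mem_Ioc]
  have hmeasT : MeasurableSet {p : ℝ × ℝ | 0 < p.2 ∧ p.2 ≤ p.1} :=
    (measurableSet_lt measurable_const measurable_snd).inter
      (measurableSet_le measurable_snd measurable_fst)
  have hint : Integrable (Function.uncurry f) (μ.prod μ) := by
    rw [hfeq]
    refine Integrable.indicator ?_ hmeasT
    have h1 : Integrable (fun _ : ℝ => (1:ℝ)) μ := integrable_const 1
    simpa using h1.mul_prod hg'
  have swap := MeasureTheory.integral_integral_swap hint
  have hL : (∫ t in (0:ℝ)..1, ∫ s in (0:ℝ)..t, g s) = ∫ t, ∫ s, f t s ∂μ ∂μ := by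
    rw [intervalIntegral.integral_of_le (by norm_num : (0:ℝ) ≤ 1)]
    refine setIntegral_congr_fun measurableSet_Ioc ?_
    intro t ht
    show (∫ s in (0:ℝ)..t, g s) = ∫ s, f t s ∂μ
    rw [intervalIntegral.integral_of_le ht.1.le]
    rw [hf]
    simp only
    rw [integral_indicator measurableSet_Ioc, hμ, Measure.restrict_restrict measurableSet_Ioc]
    congr 1
    rw [Set.inter_eq_left.2]
    exact Set.Ioc_subset_Ioc le_rfl ht.2
  have hR : (∫ s, ∫ t, f t s ∂μ ∂μ) = ∫ t in (0:ℝ)..1, (1 - t) * g t := by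
    rw [intervalIntegral.integral_of_le (by norm_num : (0:ℝ) ≤ 1)]
    refine setIntegral_congr_fun measurableSet_Ioc ?_
    intro s hs
    show (∫ t, f t s ∂μ) = (1 - s) * g s
    have hind : (fun t => f t s) = Set.indicator (Set.Ici s) (fun _ => g s) := by
      funext t
      simp only [hf, Set.indicator_apply, Set.mem_Ioc, Set.mem_Ici]
      by_cases h : s ≤ t
      · simp [h, hs.1]
      · simp [h]
    rw [hind, integral_indicator measurableSet_Ici]
    rw [setIntegral_const, hμ, Measure.real, Measure.restrict_apply measurableSet_Ici]
    have : Set.Ici s ∩ Set.Ioc (0:ℝ) 1 = Set.Icc s 1 := by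
      ext t
      simp only [Set.mem_inter_iff, Set.mem_Ici, Set.mem_Ioc, Set.mem_Icc]
      constructor
      · rintro ⟨h1, _, h3⟩; exact ⟨h1, h3⟩
      · rintro ⟨h1, h2⟩; exact ⟨h1, lt_of_lt_of_le hs.1 h1, h2⟩
    rw [this, Real.volume_Icc, ENNReal.toReal_ofReal (by linarith [hs.2])]
    simp [smul_eq_mul]
  rw [hL, swap, hR]

lemma kol_int_affine (α β x : ℝ) : (∫ t in (0:ℝ)..x, (α + β * t)) = α * x + β * x ^ 2 / 2 := by
  rw [intervalIntegral.integral_add intervalIntegrable_const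
    (intervalIntegral.intervalIntegrable_id.const_mul β),
    intervalIntegral.integral_const, intervalIntegral.integral_const_mul, integral_id,
    smul_eq_mul]
  ring

lemma kol_int_aff2 (α β : ℝ) :
    (∫ t in (0:ℝ)..1, (α * t + β * t ^ 2 / 2)) = α / 2 + β / 6 := by
  have h1 : IntervalIntegrable (fun t : ℝ => α * t) MeasureSpace.volume 0 1 :=
    intervalIntegral.intervalIntegrable_id.const_mul α
  have h2 : IntervalIntegrable (fun t : ℝ => β * t ^ 2 / 2) MeasureSpace.volume 0 1 :=
    (Continuous.intervalIntegrable (by continuity) 0 1)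
  rw [intervalIntegral.integral_add h1 h2]
  have e1 : (∫ t in (0:ℝ)..1, α * t) = α / 2 := by
    rw [intervalIntegral.integral_const_mul, integral_id]; ring
  have e2 : (∫ t in (0:ℝ)..1, β * t ^ 2 / 2) = β / 6 := by
    have : (fun t : ℝ => β * t ^ 2 / 2) = fun t : ℝ => (β / 2) * t ^ 2 := by funext t; ring
    rw [this, intervalIntegral.integral_const_mul, integral_pow]
    norm_num
    ring
  rw [e1, e2]

lemma kol_int_sq (α β : ℝ) :
    (∫ t in (0:ℝ)..1, (α + β * t) ^ 2) = α ^ 2 + α * β + β ^ 2 / 3 := by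
  have h : (fun t : ℝ => (α + β * t) ^ 2)
      = fun t : ℝ => α ^ 2 + (2 * α * β) * t + β ^ 2 * t ^ 2 := by
    funext t; ring
  rw [h, intervalIntegral.integral_add (intervalIntegrable_const.add
      (intervalIntegral.intervalIntegrable_id.const_mul _))
      ((Continuous.intervalIntegrable (by continuity) 0 1)),
    intervalIntegral.integral_add intervalIntegrable_const
      (intervalIntegral.intervalIntegrable_id.const_mul _),
    intervalIntegral.integral_const, intervalIntegral.integral_const_mul, integral_id,
    intervalIntegral.integral_const_mul, integral_pow]
  norm_num; ring

/-- `g` is the derivative of an admissible Cameron–Martin path `h` (with `h t = ∫_0^t g`)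
satisfying the constraints `h(1) = a` and `∫_0^1 h(t) dt = b`. -/
def KolConstraint (a b : ℝ) (g : ℝ → ℝ) : Prop :=
  IntegrableOn g (Set.Icc 0 1) ∧
  IntegrableOn (fun t => g t ^ 2) (Set.Icc 0 1) ∧
  (∫ t in (0:ℝ)..1, g t) = a ∧
  (∫ t in (0:ℝ)..1, ∫ s in (0:ℝ)..t, g s) = b

lemma kol_lower {a b : ℝ} {g : ℝ → ℝ} (h : KolConstraint a b g) :
    2 * a ^ 2 - 6 * a * b + 6 * b ^ 2 ≤ (1 / 2) * ∫ t in (0:ℝ)..1, g t ^ 2 := by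
  obtain ⟨hg, hg2, hA, hB⟩ := h
  have h01 : (0:ℝ) ≤ 1 := by norm_num
  have hgI : IntervalIntegrable g MeasureSpace.volume 0 1 :=
    (intervalIntegrable_iff_integrableOn_Ioc_of_le h01).2 (hg.mono_set Set.Ioc_subset_Icc_self)
  have hg2I : IntervalIntegrable (fun t => g t ^ 2) MeasureSpace.volume 0 1 :=
    (intervalIntegrable_iff_integrableOn_Ioc_of_le h01).2 (hg2.mono_set Set.Ioc_subset_Icc_self)
  have htg : IntegrableOn (fun t => t * g t) (Set.Ioc 0 1) := by
    refine Integrable.bdd_mul (c := 1) (hg.mono_set Set.Ioc_subset_Icc_self)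
      measurable_id.aestronglyMeasurable ?_
    filter_upwards [ae_restrict_mem measurableSet_Ioc] with t ht
    rw [Real.norm_eq_abs, abs_of_pos ht.1]
    exact ht.2
  have htgI : IntervalIntegrable (fun t => t * g t) MeasureSpace.volume 0 1 :=
    (intervalIntegrable_iff_integrableOn_Ioc_of_le h01).2 htg
  set α : ℝ := 6 * b - 2 * a with hα
  set β : ℝ := 6 * a - 12 * b with hβ
  have hBt : (∫ t in (0:ℝ)..1, (1 - t) * g t) = b := by rw [← kol_triangle hg]; exact hB
  have hc : (∫ t in (0:ℝ)..1, t * g t) = a - b := by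
    have hsub : (∫ t in (0:ℝ)..1, (1 - t) * g t)
        = (∫ t in (0:ℝ)..1, g t) - ∫ t in (0:ℝ)..1, t * g t := by
      rw [← intervalIntegral.integral_sub hgI htgI]
      congr 1
      funext t
      ring
    rw [hA, hBt] at hsub
    linarith
  have hlin : IntervalIntegrable (fun t => 2 * α * g t + 2 * β * (t * g t))
      MeasureSpace.volume 0 1 := (hgI.const_mul _).add (htgI.const_mul _)
  have hsq : IntervalIntegrable (fun t => (α + β * t) ^ 2) MeasureSpace.volume 0 1 :=
    Continuous.intervalIntegrable (by continuity) 0 1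
  have hnn : 0 ≤ ∫ t in (0:ℝ)..1, (g t - (α + β * t)) ^ 2 :=
    intervalIntegral.integral_nonneg h01 (fun t _ => sq_nonneg _)
  have hexp : (∫ t in (0:ℝ)..1, (g t - (α + β * t)) ^ 2)
      = (∫ t in (0:ℝ)..1, g t ^ 2) - (2 * α * a + 2 * β * (a - b))
        + (α ^ 2 + α * β + β ^ 2 / 3) := by
    have hpt : (fun t => (g t - (α + β * t)) ^ 2)
        = fun t => g t ^ 2 - (2 * α * g t + 2 * β * (t * g t)) + (α + β * t) ^ 2 := by
      funext t; ring
    rw [hpt, intervalIntegral.integral_add (hg2I.sub hlin) hsq,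
      intervalIntegral.integral_sub hg2I hlin,
      intervalIntegral.integral_add (hgI.const_mul _) (htgI.const_mul _),
      intervalIntegral.integral_const_mul, intervalIntegral.integral_const_mul,
      kol_int_sq, hA, hc]
  rw [hexp] at hnn
  rw [hα, hβ] at hnn
  nlinarith [hnn]

lemma kol_upper (a b : ℝ) :
    KolConstraint a b (fun t => (6 * b - 2 * a) + (6 * a - 12 * b) * t) ∧
    (2 * a ^ 2 - 6 * a * b + 6 * b ^ 2)
      = (1 / 2) * ∫ t in (0:ℝ)..1, ((6 * b - 2 * a) + (6 * a - 12 * b) * t) ^ 2 := by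
  set α : ℝ := 6 * b - 2 * a with hα
  set β : ℝ := 6 * a - 12 * b with hβ
  have hcont : Continuous (fun t : ℝ => α + β * t) := by continuity
  refine ⟨⟨hcont.integrableOn_Icc, ((hcont.pow 2).integrableOn_Icc), ?_, ?_⟩, ?_⟩
  · rw [kol_int_affine]; rw [hα, hβ]; ring
  · have hin : (fun t : ℝ => ∫ s in (0:ℝ)..t, (α + β * s))
        = fun t : ℝ => α * t + β * t ^ 2 / 2 := by
      funext t; exact kol_int_affine α β t
    show (∫ t in (0:ℝ)..1, ∫ s in (0:ℝ)..t, (α + β * s)) = b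
    rw [hin, kol_int_aff2, hα, hβ]; ring
  · show (2 * a ^ 2 - 6 * a * b + 6 * b ^ 2) = (1/2) * ∫ t in (0:ℝ)..1, (α + β * t) ^ 2
    rw [kol_int_sq, hα, hβ]; ring

/-- The minimal control energy for the Kolmogorov diffusion approximation to reach
`(x¹, x²)`:
`inf((1/2)‖h‖² : h(0)=0, h(1)=x¹/ε, ∫_0^1 h = x²/ε³) = 2(x¹)²/ε² - 6x¹x²/ε⁴ + 6(x²)²/ε⁶`. -/
theorem kolmogorov_control_energy (ε x1 x2 : ℝ) (hε : 0 < ε) :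
    sInf {E : ℝ | ∃ g : ℝ → ℝ, KolConstraint (x1 / ε) (x2 / ε ^ 3) g ∧
        E = (1 / 2) * ∫ t in (0:ℝ)..1, g t ^ 2}
      = 2 * x1 ^ 2 / ε ^ 2 - 6 * x1 * x2 / ε ^ 4 + 6 * x2 ^ 2 / ε ^ 6 := by
  set a : ℝ := x1 / ε with ha
  set b : ℝ := x2 / ε ^ 3 with hb
  set m : ℝ := 2 * a ^ 2 - 6 * a * b + 6 * b ^ 2 with hm
  have hval : m = 2 * x1 ^ 2 / ε ^ 2 - 6 * x1 * x2 / ε ^ 4 + 6 * x2 ^ 2 / ε ^ 6 := by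
    rw [hm, ha, hb]
    field_simp
  rw [← hval]
  obtain ⟨hK, hE⟩ := kol_upper a b
  have hmem : m ∈ {E : ℝ | ∃ g : ℝ → ℝ, KolConstraint a b g ∧
      E = (1 / 2) * ∫ t in (0:ℝ)..1, g t ^ 2} :=
    ⟨_, hK, hE⟩
  have hlb : ∀ E ∈ {E : ℝ | ∃ g : ℝ → ℝ, KolConstraint a b g ∧
      E = (1 / 2) * ∫ t in (0:ℝ)..1, g t ^ 2}, m ≤ E := by
    rintro E ⟨g, hg, rfl⟩
    exact kol_lower hg
  exact le_antisymm (csInf_le ⟨m, hlb⟩ hmem) (le_csInf ⟨m, hmem⟩ hlb)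
end

section
/- $\inf\left(\tfrac12\|h\|_{\mathbf{H}_1}^2 : h\in\mathbf{H}_1,\ \int_0^1 h(s)\,ds \ge 1\right) = \tfrac32$, with the infimum attained at $h(t)=3t - \tfrac32 t^2$. -/
open MeasureTheory

lemma fubini_tri (g : ℝ → ℝ) (hg : IntegrableOn g (Set.Icc 0 1)) :
    (∫ t in (0:ℝ)..1, ∫ s in (0:ℝ)..t, g s) = ∫ s in (0:ℝ)..1, (1 - s) * g s := by
  have hg' : IntegrableOn g (Set.Ioc 0 1) := hg.mono_set Set.Ioc_subset_Icc_self
  rw [intervalIntegral.integral_of_le zero_le_one, intervalIntegral.integral_of_le zero_le_one]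
  have hT : MeasurableSet {p : ℝ × ℝ | 0 < p.2 ∧ p.2 ≤ p.1} :=
    (measurableSet_lt measurable_const measurable_snd).inter
      (measurableSet_le measurable_snd measurable_fst)
  set ν := volume.restrict (Set.Ioc (0:ℝ) 1)
  have hfin : IsFiniteMeasure ν := by
    constructor
    rw [Measure.restrict_apply_univ]
    simp [Real.volume_Ioc]
  have hprod : Integrable (fun p : ℝ × ℝ => ({p : ℝ × ℝ | 0 < p.2 ∧ p.2 ≤ p.1}).indicator
      (fun p => g p.2) p) (ν.prod ν) := by
    have hdom : Integrable (fun p : ℝ × ℝ => (1:ℝ) * g p.2) (ν.prod ν) :=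
      (integrable_const (1:ℝ)).mul_prod hg'
    refine Integrable.mono (by simpa using hdom) (hg'.1.comp_snd.indicator hT) ?_
    filter_upwards with p
    exact (norm_indicator_le_norm_self _ _)
  have key : ∀ t ∈ Set.Ioc (0:ℝ) 1, (∫ s in (0:ℝ)..t, g s) =
      ∫ s in Set.Ioc (0:ℝ) 1, ({p : ℝ × ℝ | 0 < p.2 ∧ p.2 ≤ p.1}).indicator
        (fun p => g p.2) (t, s) := by
    intro t ht
    have h1 : (fun s => ({p : ℝ × ℝ | 0 < p.2 ∧ p.2 ≤ p.1}).indicator (fun p => g p.2) (t, s)) =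
        fun s => (Set.Ioc (0:ℝ) t).indicator g s := by
      funext s
      by_cases hs : s ∈ Set.Ioc (0:ℝ) t
      · rw [Set.indicator_of_mem hs, Set.indicator_of_mem]
        exact ⟨hs.1, hs.2⟩
      · rw [Set.indicator_of_notMem hs, Set.indicator_of_notMem]
        intro h; exact hs ⟨h.1, h.2⟩
    rw [h1, setIntegral_indicator measurableSet_Ioc,
      Set.inter_eq_self_of_subset_right (Set.Ioc_subset_Ioc le_rfl ht.2),
      intervalIntegral.integral_of_le ht.1.le]
  calc (∫ t in Set.Ioc (0:ℝ) 1, ∫ s in (0:ℝ)..t, g s)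
      = ∫ t, ∫ s, ({p : ℝ × ℝ | 0 < p.2 ∧ p.2 ≤ p.1}).indicator
          (fun p => g p.2) (t, s) ∂ν ∂ν :=
        setIntegral_congr_fun measurableSet_Ioc key
    _ = ∫ s, ∫ t, ({p : ℝ × ℝ | 0 < p.2 ∧ p.2 ≤ p.1}).indicator
          (fun p => g p.2) (t, s) ∂ν ∂ν := integral_integral_swap hprod
    _ = ∫ s in Set.Ioc (0:ℝ) 1, (1 - s) * g s := by
        refine setIntegral_congr_fun measurableSet_Ioc (fun s hs => ?_)
        have h2 : (fun t => ({p : ℝ × ℝ | 0 < p.2 ∧ p.2 ≤ p.1}).indicator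
            (fun p => g p.2) (t, s)) = fun t => (Set.Ici s).indicator (fun _ => g s) t := by
          funext t
          simp only [Set.indicator_apply, Set.mem_setOf_eq, Set.mem_Ici]
          by_cases h : s ≤ t
          · simp [h, hs.1]
          · simp [h]
        rw [h2, setIntegral_indicator measurableSet_Ici, setIntegral_const]
        have h3 : Set.Ioc 0 1 ∩ Set.Ici s = Set.Icc s 1 := by
          ext x
          simp only [Set.mem_inter_iff, Set.mem_Ioc, Set.mem_Ici, Set.mem_Icc]
          constructor
          · rintro ⟨⟨_, hx1⟩, hxs⟩; exact ⟨hxs, hx1⟩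
          · rintro ⟨hxs, hx1⟩; exact ⟨⟨lt_of_lt_of_le hs.1 hxs, hx1⟩, hxs⟩
        rw [h3, Real.volume_real_Icc, max_eq_left (by linarith [hs.2])]
        simp [smul_eq_mul]

lemma poly1 (t : ℝ) : (∫ s in (0:ℝ)..t, (3 - 3 * s)) = 3 * t - 3 / 2 * t ^ 2 := by
  have hd : ∀ x : ℝ, HasDerivAt (fun x : ℝ => 3 * x - 3 / 2 * x ^ 2) (3 - 3 * x) x := by
    intro x
    have h := ((hasDerivAt_id x).const_mul 3).sub ((hasDerivAt_pow 2 x).const_mul (3 / 2))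
    refine h.congr_deriv ?_
    simp; ring
  rw [intervalIntegral.integral_eq_sub_of_hasDerivAt (fun x _ => hd x)
    ((Continuous.intervalIntegrable (by continuity) 0 t))]
  ring

lemma energy0 : (∫ t in (0:ℝ)..1, (3 - 3 * t) ^ 2) = 3 := by
  have hd : ∀ x : ℝ, HasDerivAt (fun x : ℝ => 9 * x - 9 * x ^ 2 + 3 * x ^ 3)
      ((3 - 3 * x) ^ 2) x := by
    intro x
    have h := (((hasDerivAt_id x).const_mul 9).sub ((hasDerivAt_pow 2 x).const_mul 9)).add
      ((hasDerivAt_pow 3 x).const_mul 3)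
    refine h.congr_deriv ?_
    simp; ring
  rw [intervalIntegral.integral_eq_sub_of_hasDerivAt (fun x _ => hd x)
    ((Continuous.intervalIntegrable (by continuity) 0 1))]
  norm_num

lemma constr0 : (∫ t in (0:ℝ)..1, ∫ s in (0:ℝ)..t, (3 - 3 * s)) = 1 := by
  simp_rw [poly1]
  have hd : ∀ x : ℝ, HasDerivAt (fun x : ℝ => 3 / 2 * x ^ 2 - 1 / 2 * x ^ 3)
      (3 * x - 3 / 2 * x ^ 2) x := by
    intro x
    have h := ((hasDerivAt_pow 2 x).const_mul (3 / 2)).sub ((hasDerivAt_pow 3 x).const_mul (1 / 2))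
    refine h.congr_deriv ?_
    simp; ring
  rw [intervalIntegral.integral_eq_sub_of_hasDerivAt (fun x _ => hd x)
    ((Continuous.intervalIntegrable (by continuity) 0 1))]
  norm_num

lemma sqval : (∫ s in (0:ℝ)..1, (1 - s) ^ 2) = 1 / 3 := by
  have hd : ∀ x : ℝ, HasDerivAt (fun x : ℝ => x - x ^ 2 + 1 / 3 * x ^ 3) ((1 - x) ^ 2) x := by
    intro x
    have h := ((hasDerivAt_id x).sub (hasDerivAt_pow 2 x)).add
      ((hasDerivAt_pow 3 x).const_mul (1 / 3))
    refine h.congr_deriv ?_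
    simp; ring
  rw [intervalIntegral.integral_eq_sub_of_hasDerivAt (fun x _ => hd x)
    ((Continuous.intervalIntegrable (by continuity) 0 1))]
  norm_num

/-- `inf((1/2)‖h‖²_{H₁} : h ∈ H₁, ∫_0^1 h(s) ds ≥ 1) = 3/2`, attained at
`h(t) = 3t - (3/2)t²` (whose derivative is `g₀(t) = 3 - 3t`). The Cameron–Martin space is
encoded via derivatives `g`, with `h t = ∫_0^t g`. -/
theorem kolmogorov_halfspace_energy_attained :
    (IsLeast {E : ℝ | ∃ g : ℝ → ℝ,
        IntegrableOn g (Set.Icc 0 1) ∧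
        IntegrableOn (fun t => g t ^ 2) (Set.Icc 0 1) ∧
        (1:ℝ) ≤ (∫ t in (0:ℝ)..1, ∫ s in (0:ℝ)..t, g s) ∧
        E = (1 / 2) * ∫ t in (0:ℝ)..1, g t ^ 2}
      (3 / 2)) ∧
    (1 / 2) * (∫ t in (0:ℝ)..1, (3 - 3 * t) ^ 2) = 3 / 2 ∧
    (1:ℝ) ≤ (∫ t in (0:ℝ)..1, ∫ s in (0:ℝ)..t, (3 - 3 * s)) ∧
    ∀ t ∈ Set.Icc (0:ℝ) 1, (∫ s in (0:ℝ)..t, (3 - 3 * s)) = 3 * t - 3 / 2 * t ^ 2 := by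
  refine ⟨⟨?_, ?_⟩, by rw [energy0]; norm_num, by rw [constr0], fun t _ => poly1 t⟩
  · -- membership
    refine ⟨fun s => 3 - 3 * s, ?_, ?_, by rw [constr0], by rw [energy0]; norm_num⟩
    · exact Continuous.integrableOn_Icc (by continuity)
    · exact Continuous.integrableOn_Icc (by continuity)
  · -- lower bound
    rintro E ⟨g, hg, hg2, hc, hE⟩
    have hg' : IntegrableOn g (Set.Ioc 0 1) := hg.mono_set Set.Ioc_subset_Icc_self
    have h2 : IntegrableOn (fun s => g s ^ 2) (Set.Ioc 0 1) :=
      hg2.mono_set Set.Ioc_subset_Icc_self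
    have hcross : IntegrableOn (fun s => (1 - s) * g s) (Set.Ioc 0 1) := by
      refine Integrable.bdd_mul hg' (c := 1)
        ((continuous_const.sub continuous_id).aestronglyMeasurable) ?_
      filter_upwards [ae_restrict_mem measurableSet_Ioc] with x hx
      rw [Real.norm_eq_abs, abs_le]
      constructor <;> [linarith [hx.2]; linarith [hx.1]]
    have hsq : IntegrableOn (fun s : ℝ => (1 - s) ^ 2) (Set.Ioc 0 1) :=
      (Continuous.integrableOn_Icc (by continuity)).mono_set Set.Ioc_subset_Icc_self
    have hI : (1:ℝ) ≤ ∫ s in Set.Ioc (0:ℝ) 1, (1 - s) * g s := by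
      rw [fubini_tri g hg, intervalIntegral.integral_of_le zero_le_one] at hc
      exact hc
    have h0 : 0 ≤ ∫ s in Set.Ioc (0:ℝ) 1, (g s - 3 * (1 - s)) ^ 2 :=
      setIntegral_nonneg measurableSet_Ioc (fun x _ => sq_nonneg _)
    have hexp : (∫ s in Set.Ioc (0:ℝ) 1, (g s - 3 * (1 - s)) ^ 2) =
        (∫ s in Set.Ioc (0:ℝ) 1, g s ^ 2) - 6 * (∫ s in Set.Ioc (0:ℝ) 1, (1 - s) * g s)
          + 9 * (∫ s in Set.Ioc (0:ℝ) 1, (1 - s) ^ 2) := by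
      have hfun : (fun s => (g s - 3 * (1 - s)) ^ 2) =
          fun s => (g s ^ 2 - 6 * ((1 - s) * g s)) + 9 * (1 - s) ^ 2 := by
        funext s; ring
      have hc6 : Integrable (fun s => 6 * ((1 - s) * g s))
          (volume.restrict (Set.Ioc (0:ℝ) 1)) := hcross.const_mul 6
      have hsub : Integrable (fun s => g s ^ 2 - 6 * ((1 - s) * g s))
          (volume.restrict (Set.Ioc (0:ℝ) 1)) := h2.sub hc6
      have hs9 : Integrable (fun s : ℝ => 9 * (1 - s) ^ 2)
          (volume.restrict (Set.Ioc (0:ℝ) 1)) := hsq.const_mul 9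
      rw [hfun, integral_add hsub hs9, integral_sub h2 hc6,
        integral_const_mul, integral_const_mul]
    have hsv : (∫ s in Set.Ioc (0:ℝ) 1, (1 - s) ^ 2) = 1 / 3 := by
      rw [← intervalIntegral.integral_of_le zero_le_one]; exact sqval
    have hg2v : (∫ t in (0:ℝ)..1, g t ^ 2) = ∫ s in Set.Ioc (0:ℝ) 1, g s ^ 2 :=
      intervalIntegral.integral_of_le zero_le_one
    rw [hE, hg2v]
    rw [hexp, hsv] at h0
    linarith
end

section
/- The function $g(t) = \log\frac{\cosh^2\beta}{\cosh^2(\beta(1-t))}$ on $[0,1]$, with $\beta > 0$, satisfies the Euler–Lagrange equation $\ddot g(t) = \lambda e^{g(t)}$ with $\lambda = -2\beta^2/\cosh^2\beta$, together with $g(0)=0$ and $\dot g(1) = 0$; moreover $\int_0^1 e^{g(s)} ds = \frac{\sinh 2\beta}{2\beta}$ and $\tfrac12 \int_0^1 \dot g(s)^2 ds = 2\beta(\beta - \tanh\beta)$. -/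
private lemma tanh_eq_div : Real.tanh = fun x => Real.sinh x / Real.cosh x :=
  funext fun x => Real.tanh_eq_sinh_div_cosh x

private lemma hasDerivAt_tanh' (x : ℝ) :
    HasDerivAt Real.tanh (1 / Real.cosh x ^ 2) x := by
  rw [tanh_eq_div]
  have h := (Real.hasDerivAt_sinh x).div (Real.hasDerivAt_cosh x) (Real.cosh_pos x).ne'
  refine h.congr_deriv ?_
  have := Real.cosh_sq_sub_sinh_sq x
  field_simp
  nlinarith [this]

private lemma continuous_tanh' : Continuous Real.tanh := by
  rw [tanh_eq_div]
  exact Real.continuous_sinh.div Real.continuous_cosh fun x => (Real.cosh_pos x).ne'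

/-- The function `g(t) = log(cosh²β / cosh²(β(1-t)))`, `β > 0`, satisfies the
Euler–Lagrange equation `g̈ = λ e^g` with `λ = -2β²/cosh²β`, the boundary conditions
`g(0) = 0` and `ġ(1) = 0`, and `∫_0^1 e^g = sinh(2β)/(2β)`,
`(1/2)∫_0^1 ġ² = 2β(β - tanh β)`. -/
theorem solvable_euler_lagrange (β : ℝ) (hβ : 0 < β) :
    let g : ℝ → ℝ := fun t => Real.log (Real.cosh β ^ 2 / Real.cosh (β * (1 - t)) ^ 2)
    (∀ t : ℝ, deriv (deriv g) t
        = (-2 * β ^ 2 / Real.cosh β ^ 2) * Real.exp (g t)) ∧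
    g 0 = 0 ∧
    deriv g 1 = 0 ∧
    (∫ s in (0:ℝ)..1, Real.exp (g s)) = Real.sinh (2 * β) / (2 * β) ∧
    (1 / 2) * (∫ s in (0:ℝ)..1, deriv g s ^ 2) = 2 * β * (β - Real.tanh β) := by
  intro g
  have hβ0 : β ≠ 0 := hβ.ne'
  have hcne : ∀ x : ℝ, Real.cosh x ≠ 0 := fun x => (Real.cosh_pos x).ne'
  have hu : ∀ t : ℝ, HasDerivAt (fun t : ℝ => β * (1 - t)) (-β) t := by
    intro t
    have := ((hasDerivAt_id t).const_sub (1:ℝ)).const_mul β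
    simpa using this
  have htanh : ∀ s : ℝ, HasDerivAt (fun s : ℝ => Real.tanh (β * (1 - s)))
      (1 / Real.cosh (β * (1 - s)) ^ 2 * (-β)) s :=
    fun s => (hasDerivAt_tanh' _).comp s (hu s)
  have hderiv : ∀ t : ℝ, HasDerivAt g (2 * β * Real.tanh (β * (1 - t))) t := by
    intro t
    have hg : g = fun t => 2 * Real.log (Real.cosh β) -
        2 * Real.log (Real.cosh (β * (1 - t))) := by
      funext s
      show Real.log _ = _
      rw [Real.log_div (pow_ne_zero 2 (hcne β)) (pow_ne_zero 2 (hcne _)),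
        Real.log_pow, Real.log_pow]
      push_cast; ring
    rw [hg]
    have hcosh : HasDerivAt (fun t : ℝ => Real.cosh (β * (1 - t)))
        (Real.sinh (β * (1 - t)) * (-β)) t := (Real.hasDerivAt_cosh _).comp t (hu t)
    have hlog := hcosh.log (hcne _)
    have := (hlog.const_mul 2).const_sub (2 * Real.log (Real.cosh β))
    refine this.congr_deriv ?_
    rw [Real.tanh_eq_sinh_div_cosh]
    field_simp
  have hderiv' : deriv g = fun t => 2 * β * Real.tanh (β * (1 - t)) :=
    funext fun t => (hderiv t).deriv
  have hd2 : ∀ t : ℝ, HasDerivAt (deriv g)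
      (-2 * β ^ 2 / Real.cosh (β * (1 - t)) ^ 2) t := by
    intro t
    rw [hderiv']
    have := (htanh t).const_mul (2 * β)
    refine this.congr_deriv ?_
    field_simp
  refine ⟨?_, ?_, ?_, ?_, ?_⟩
  · intro t
    rw [(hd2 t).deriv]
    have hpos : 0 < Real.cosh β ^ 2 / Real.cosh (β * (1 - t)) ^ 2 := by positivity
    show _ = _ * Real.exp (Real.log _)
    rw [Real.exp_log hpos]
    field_simp
  · show Real.log (Real.cosh β ^ 2 / Real.cosh (β * (1 - 0)) ^ 2) = 0
    norm_num
  · rw [hderiv']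
    simp
  · have hcongr : (∫ s in (0:ℝ)..1, Real.exp (g s))
        = ∫ s in (0:ℝ)..1, Real.cosh β ^ 2 / Real.cosh (β * (1 - s)) ^ 2 := by
      apply intervalIntegral.integral_congr
      intro s _
      exact Real.exp_log (by positivity)
    rw [hcongr]
    have hF : ∀ s ∈ Set.uIcc (0:ℝ) 1, HasDerivAt
        (fun s : ℝ => -(Real.cosh β ^ 2 / β) * Real.tanh (β * (1 - s)))
        (Real.cosh β ^ 2 / Real.cosh (β * (1 - s)) ^ 2) s := by
      intro s _
      have := (htanh s).const_mul (-(Real.cosh β ^ 2 / β))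
      refine this.congr_deriv ?_
      field_simp
    have hcont : Continuous fun s : ℝ => Real.cosh β ^ 2 / Real.cosh (β * (1 - s)) ^ 2 :=
      Continuous.div continuous_const (by fun_prop) (fun s => pow_ne_zero 2 (hcne _))
    rw [intervalIntegral.integral_eq_sub_of_hasDerivAt hF (hcont.intervalIntegrable 0 1)]
    have h1 : β * (1 - 1) = 0 := by ring
    have h0 : β * (1 - 0) = β := by ring
    rw [h1, h0, Real.tanh_zero, Real.sinh_two_mul, Real.tanh_eq_sinh_div_cosh]
    field_simp
    ring
  · have hcongr : (∫ s in (0:ℝ)..1, deriv g s ^ 2)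
        = ∫ s in (0:ℝ)..1, (2 * β * Real.tanh (β * (1 - s))) ^ 2 := by
      rw [hderiv']
    rw [hcongr]
    have hG : ∀ s ∈ Set.uIcc (0:ℝ) 1, HasDerivAt
        (fun s : ℝ => 4 * β ^ 2 * s + 4 * β * Real.tanh (β * (1 - s)))
        ((2 * β * Real.tanh (β * (1 - s))) ^ 2) s := by
      intro s _
      have h1 : HasDerivAt (fun s : ℝ => 4 * β ^ 2 * s) (4 * β ^ 2) s := by
        simpa using (hasDerivAt_id s).const_mul (4 * β ^ 2)
      have := h1.add ((htanh s).const_mul (4 * β))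
      refine this.congr_deriv ?_
      have hsq : Real.sinh (β * (1 - s)) ^ 2 = Real.cosh (β * (1 - s)) ^ 2 - 1 := by
        have := Real.cosh_sq_sub_sinh_sq (β * (1 - s)); linarith
      rw [Real.tanh_eq_sinh_div_cosh]
      field_simp
      linear_combination (-4) * hsq
    have hcont : Continuous fun s : ℝ => (2 * β * Real.tanh (β * (1 - s))) ^ 2 := by
      apply Continuous.pow
      exact continuous_const.mul (continuous_tanh'.comp (by fun_prop))
    rw [intervalIntegral.integral_eq_sub_of_hasDerivAt hG (hcont.intervalIntegrable 0 1)]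
    have h1 : β * (1 - 1) = 0 := by ring
    have h0 : β * (1 - 0) = β := by ring
    rw [h1, h0, Real.tanh_zero]
    ring
end
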